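/- Let μ be a probability measure, E an event with μ_b(E) > 0 where μ_b is a second probability measure absolutely continuous with respect to μ with density dμ_b/dμ = exp(b·Z - b²·σ²/2) for a centered Gaussian variable Z (under μ) with variance σ². Then μ(E) ≥ μ_b(E)·exp(-(b²σ² + 2/e)/(2·μ_b(E))). -/

import Mathlib

open MeasureTheory ProbabilityTheory

section Aux

open Real

/-- Tilting identity for the Gaussian density. -/
lemma stmt15_pdf_tilt (b : ℝ) (σ2 : NNReal) (x : ℝ) :
    Real.exp (b * x - b ^ 2 * (σ2 : ℝ) / 2) * gaussianPDFReal 0 σ2 x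
      = gaussianPDFReal (b * (σ2 : ℝ)) σ2 x := by
  rcases eq_or_ne σ2 0 with h | h
  · simp [h]
  · have hv : (0 : ℝ) < (σ2 : ℝ) := by positivity
    unfold gaussianPDFReal
    rw [mul_comm (Real.exp _), mul_assoc, ← Real.exp_add]
    congr 1
    field_simp
    ring

lemma stmt15_integrable_id_mul_pdf0 {σ2 : NNReal} (h : σ2 ≠ 0) :
    Integrable (fun x : ℝ => x * gaussianPDFReal 0 σ2 x) := by
  have hv : (0 : ℝ) < (σ2 : ℝ) := by positivity
  have hb : (0 : ℝ) < 1 / (2 * (σ2 : ℝ)) := by positivity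
  have h1 := (integrable_rpow_mul_exp_neg_mul_sq hb (by norm_num : (-1 : ℝ) < 1)).const_mul
    ((Real.sqrt (2 * Real.pi * (σ2 : ℝ)))⁻¹)
  refine h1.congr ?_
  filter_upwards with x
  unfold gaussianPDFReal
  rw [Real.rpow_one]
  rw [show -(1 / (2 * (σ2 : ℝ))) * x ^ 2 = -(x - 0) ^ 2 / (2 * (σ2 : ℝ)) by
    field_simp; ring]
  ring

lemma stmt15_int_id_mul_pdf0 (σ2 : NNReal) :
    ∫ x : ℝ, x * gaussianPDFReal 0 σ2 x = 0 := by
  have hodd : ∀ x : ℝ, (-x) * gaussianPDFReal 0 σ2 (-x) = -(x * gaussianPDFReal 0 σ2 x) := by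
    intro x
    have : gaussianPDFReal 0 σ2 (-x) = gaussianPDFReal 0 σ2 x := by
      unfold gaussianPDFReal
      norm_num
    rw [this]; ring
  have h := MeasureTheory.integral_neg_eq_self (fun x : ℝ => x * gaussianPDFReal 0 σ2 x) volume
  simp_rw [hodd, integral_neg] at h
  linarith

lemma stmt15_integrable_id_mul_pdf {σ2 : NNReal} (h : σ2 ≠ 0) (m : ℝ) :
    Integrable (fun x : ℝ => x * gaussianPDFReal m σ2 x) := by
  have hpdf : ∀ x : ℝ, gaussianPDFReal m σ2 x = gaussianPDFReal 0 σ2 (x - m) := by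
    intro x
    rw [gaussianPDFReal_sub, zero_add]
  have hF : Integrable (fun x : ℝ => (x + m) * gaussianPDFReal 0 σ2 x) := by
    refine ((stmt15_integrable_id_mul_pdf0 h).add
      ((integrable_gaussianPDFReal 0 σ2).const_mul m)).congr ?_
    filter_upwards with x
    simp only [Pi.add_apply]
    ring
  have hmp := MeasureTheory.measurePreserving_add_right (volume : Measure ℝ) (-m)
  have := (hmp.integrable_comp hF.aestronglyMeasurable).mpr hF
  refine this.congr ?_
  filter_upwards with x
  simp only [Function.comp]
  rw [hpdf x]
  ring_nf

lemma stmt15_int_id_mul_pdf {σ2 : NNReal} (h : σ2 ≠ 0) (m : ℝ) :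
    ∫ x : ℝ, x * gaussianPDFReal m σ2 x = m := by
  have hpdf : ∀ x : ℝ, gaussianPDFReal m σ2 x = gaussianPDFReal 0 σ2 (x - m) := by
    intro x
    rw [gaussianPDFReal_sub, zero_add]
  have h1 : (∫ x : ℝ, x * gaussianPDFReal m σ2 x)
      = ∫ x : ℝ, (x + m) * gaussianPDFReal 0 σ2 x := by
    rw [← MeasureTheory.integral_add_right_eq_self
      (fun x : ℝ => x * gaussianPDFReal m σ2 x) m]
    congr 1 with x
    rw [hpdf, add_sub_cancel_right]
  rw [h1]
  have h2 : ∀ x : ℝ, (x + m) * gaussianPDFReal 0 σ2 x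
      = x * gaussianPDFReal 0 σ2 x + m * gaussianPDFReal 0 σ2 x := fun x => by ring
  simp_rw [h2]
  rw [integral_add (stmt15_integrable_id_mul_pdf0 h)
    ((integrable_gaussianPDFReal 0 σ2).const_mul m), stmt15_int_id_mul_pdf0,
    integral_const_mul, integral_gaussianPDFReal_eq_one 0 h]
  ring

/-- Transfer integrals over a nondegenerate Gaussian to Lebesgue integrals. -/
lemma stmt15_gauss_withDensity {σ2 : NNReal} (h : σ2 ≠ 0) :
    gaussianReal 0 σ2 = (volume : Measure ℝ).withDensity
      (fun x => ((gaussianPDFReal 0 σ2 x).toNNReal : ENNReal)) := by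
  rw [gaussianReal_of_var_ne_zero 0 h]
  congr 1

lemma stmt15_integrable_gauss {σ2 : NNReal} (h : σ2 ≠ 0) (f : ℝ → ℝ) :
    Integrable f (gaussianReal 0 σ2)
      ↔ Integrable (fun x => gaussianPDFReal 0 σ2 x * f x) := by
  rw [stmt15_gauss_withDensity h,
    integrable_withDensity_iff_integrable_smul
      (measurable_gaussianPDFReal 0 σ2).real_toNNReal]
  constructor <;> intro hf <;> refine hf.congr ?_ <;> filter_upwards with x <;>
    simp [NNReal.smul_def, Real.coe_toNNReal _ (gaussianPDFReal_nonneg 0 σ2 x)]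

lemma stmt15_integral_gauss {σ2 : NNReal} (h : σ2 ≠ 0) (f : ℝ → ℝ) :
    ∫ x, f x ∂(gaussianReal 0 σ2) = ∫ x, gaussianPDFReal 0 σ2 x * f x := by
  rw [stmt15_gauss_withDensity h,
    integral_withDensity_eq_integral_smul
      (measurable_gaussianPDFReal 0 σ2).real_toNNReal]
  congr 1 with x
  simp [NNReal.smul_def, Real.coe_toNNReal _ (gaussianPDFReal_nonneg 0 σ2 x)]

lemma stmt15_tilt_integrable (b : ℝ) (σ2 : NNReal) :
    Integrable (fun x => Real.exp (b * x - b ^ 2 * (σ2 : ℝ) / 2)) (gaussianReal 0 σ2) := by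
  rcases eq_or_ne σ2 0 with h | h
  · rw [h, gaussianReal_zero_var]
    refine (integrable_const (Real.exp (b * 0 - b ^ 2 * ((0 : NNReal) : ℝ) / 2))).congr ?_
    rw [MeasureTheory.ae_dirac_eq]
    exact Filter.eventually_pure.mpr rfl
  · rw [stmt15_integrable_gauss h]
    refine (integrable_gaussianPDFReal (b * (σ2 : ℝ)) σ2).congr ?_
    filter_upwards with x
    rw [← stmt15_pdf_tilt b σ2 x]
    ring

lemma stmt15_tilt_integral (b : ℝ) (σ2 : NNReal) :
    ∫ x, Real.exp (b * x - b ^ 2 * (σ2 : ℝ) / 2) ∂(gaussianReal 0 σ2) = 1 := by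
  rcases eq_or_ne σ2 0 with h | h
  · rw [h, gaussianReal_zero_var, integral_dirac]
    norm_num
  · rw [stmt15_integral_gauss h]
    simp_rw [mul_comm (gaussianPDFReal 0 σ2 _), stmt15_pdf_tilt]
    exact integral_gaussianPDFReal_eq_one _ h

lemma stmt15_tilt_mean_integrable (b : ℝ) (σ2 : NNReal) :
    Integrable (fun x => x * Real.exp (b * x - b ^ 2 * (σ2 : ℝ) / 2)) (gaussianReal 0 σ2) := by
  rcases eq_or_ne σ2 0 with h | h
  · rw [h, gaussianReal_zero_var]
    refine (integrable_const ((0 : ℝ) * Real.exp (b * 0 - b ^ 2 * ((0 : NNReal) : ℝ) / 2))).congr ?_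
    rw [MeasureTheory.ae_dirac_eq]
    exact Filter.eventually_pure.mpr rfl
  · rw [stmt15_integrable_gauss h]
    refine (stmt15_integrable_id_mul_pdf h (b * (σ2 : ℝ))).congr ?_
    filter_upwards with x
    rw [← stmt15_pdf_tilt b σ2 x]
    ring

lemma stmt15_tilt_mean (b : ℝ) (σ2 : NNReal) :
    ∫ x, x * Real.exp (b * x - b ^ 2 * (σ2 : ℝ) / 2) ∂(gaussianReal 0 σ2)
      = b * (σ2 : ℝ) := by
  rcases eq_or_ne σ2 0 with h | h
  · rw [h, gaussianReal_zero_var, integral_dirac]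
    norm_num
  · rw [stmt15_integral_gauss h]
    have : ∀ x : ℝ, gaussianPDFReal 0 σ2 x * (x * Real.exp (b * x - b ^ 2 * (σ2 : ℝ) / 2))
        = x * gaussianPDFReal (b * (σ2 : ℝ)) σ2 x := by
      intro x
      rw [← stmt15_pdf_tilt b σ2 x]
      ring
    simp_rw [this]
    exact stmt15_int_id_mul_pdf h _

end Aux

theorem stmt15 {Ω : Type*} [MeasurableSpace Ω] (μ : Measure Ω) [IsProbabilityMeasure μ]
    (Z : Ω → ℝ) (hZ : Measurable Z) (b : ℝ) (σ2 : NNReal)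
    (hgauss : μ.map Z = gaussianReal 0 σ2)
    (E : Set Ω) (hE : MeasurableSet E)
    (μb : Measure Ω)
    (hμb : μb = μ.withDensity fun ω =>
      ENNReal.ofReal (Real.exp (b * Z ω - b ^ 2 * (σ2 : ℝ) / 2)))
    (hpos : 0 < (μb E).toReal) :
    (μb E).toReal * Real.exp (-(b ^ 2 * (σ2 : ℝ) + 2 / Real.exp 1) /
      (2 * (μb E).toReal)) ≤ (μ E).toReal := by
  set v : ℝ := (σ2 : ℝ) with hv
  set c : ℝ := b ^ 2 * v / 2 with hc
  set ρ : Ω → ℝ := fun ω => Real.exp (b * Z ω - c) with hρ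
  have hρmeas : Measurable ρ := ((hZ.const_mul b).sub measurable_const).exp
  have hρnn : ∀ ω, 0 ≤ ρ ω := fun ω => (Real.exp_pos _).le
  have hgm : Measurable (fun x : ℝ => Real.exp (b * x - c)) :=
    ((measurable_id.const_mul b).sub measurable_const).exp
  have hmap : ∀ f : ℝ → ℝ, Measurable f → Integrable f (gaussianReal 0 σ2) →
      Integrable (fun ω => f (Z ω)) μ := by
    intro f hf hif
    exact (integrable_map_measure hf.aestronglyMeasurable hZ.aemeasurable).mp
      (by rwa [hgauss])
  have hint_map : ∀ f : ℝ → ℝ, Measurable f →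
      (∫ ω, f (Z ω) ∂μ) = ∫ x, f x ∂(gaussianReal 0 σ2) := by
    intro f hf
    rw [← hgauss, integral_map hZ.aemeasurable hf.aestronglyMeasurable]
  have hρint : Integrable ρ μ := hmap _ hgm (stmt15_tilt_integrable b σ2)
  have hρ1 : ∫ ω, ρ ω ∂μ = 1 :=
    (hint_map (fun x => Real.exp (b * x - c)) hgm).trans (stmt15_tilt_integral b σ2)
  have hZρint : Integrable (fun ω => Z ω * ρ ω) μ :=
    hmap (fun x => x * Real.exp (b * x - c)) (measurable_id.mul hgm)
      (stmt15_tilt_mean_integrable b σ2)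
  have hZρ : ∫ ω, Z ω * ρ ω ∂μ = b * v :=
    (hint_map (fun x => x * Real.exp (b * x - c)) (measurable_id.mul hgm)).trans
      (stmt15_tilt_mean b σ2)
  -- value of μb E
  have hνeq : (μb E).toReal = ∫ ω in E, ρ ω ∂μ := by
    rw [hμb, withDensity_apply _ hE,
      integral_eq_lintegral_of_nonneg_ae (Filter.Eventually.of_forall hρnn)
        hρmeas.aestronglyMeasurable.restrict]
  set ν : ℝ := (μb E).toReal with hνdef
  have hν0 : ν ≠ 0 := ne_of_gt hpos
  set m : ℝ := (b ^ 2 * v + 2 / Real.exp 1) / (2 * ν) with hm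
  have hmν : m * ν = c + (Real.exp 1)⁻¹ := by
    rw [hm, hc]
    have he : Real.exp 1 ≠ 0 := (Real.exp_pos 1).ne'
    field_simp
  -- integrability of (b Z - c) ρ
  have huρint : Integrable (fun ω => (b * Z ω - c) * ρ ω) μ := by
    refine ((hZρint.const_mul b).sub (hρint.const_mul c)).congr ?_
    filter_upwards with ω
    simp only [Pi.sub_apply]
    ring
  have huρ : ∫ ω, (b * Z ω - c) * ρ ω ∂μ = c := by
    have hrw : (fun ω => (b * Z ω - c) * ρ ω)
        = fun ω => b * (Z ω * ρ ω) - c * ρ ω := by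
      funext ω; ring
    rw [hrw, integral_sub (hZρint.const_mul b) (hρint.const_mul c),
      integral_const_mul, integral_const_mul, hZρ, hρ1, hc]
    ring
  -- negative part bound
  have hnegbound : ∀ ω, max (-(b * Z ω - c)) 0 * ρ ω ≤ (Real.exp 1)⁻¹ := by
    intro ω
    set s := b * Z ω - c with hs
    have h1 : max (-s) 0 ≤ Real.exp (-s - 1) := by
      refine max_le ?_ (Real.exp_pos _).le
      linarith [Real.add_one_le_exp (-s - 1)]
    have h2 : max (-s) 0 * Real.exp s ≤ Real.exp (-s - 1) * Real.exp s :=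
      mul_le_mul_of_nonneg_right h1 (Real.exp_pos _).le
    calc max (-s) 0 * ρ ω = max (-s) 0 * Real.exp s := rfl
      _ ≤ Real.exp (-s - 1) * Real.exp s := h2
      _ = (Real.exp 1)⁻¹ := by
          rw [← Real.exp_add, show -s - 1 + s = -1 by ring, Real.exp_neg]
  have hnegmeas : Measurable (fun ω => max (-(b * Z ω - c)) 0 * ρ ω) :=
    ((((hZ.const_mul b).sub measurable_const).neg.max measurable_const).mul hρmeas)
  have hnegnn : ∀ ω, 0 ≤ max (-(b * Z ω - c)) 0 * ρ ω :=
    fun ω => mul_nonneg (le_max_right _ _) (hρnn ω)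
  have hnegint : Integrable (fun ω => max (-(b * Z ω - c)) 0 * ρ ω) μ := by
    refine Integrable.mono' (integrable_const ((Real.exp 1)⁻¹))
      hnegmeas.aestronglyMeasurable ?_
    filter_upwards with ω
    rw [Real.norm_eq_abs, abs_of_nonneg (hnegnn ω)]
    exact hnegbound ω
  have hnegle : ∫ ω, max (-(b * Z ω - c)) 0 * ρ ω ∂μ ≤ (Real.exp 1)⁻¹ := by
    calc ∫ ω, max (-(b * Z ω - c)) 0 * ρ ω ∂μ
        ≤ ∫ _ω, (Real.exp 1)⁻¹ ∂μ := integral_mono hnegint (integrable_const _) hnegbound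
      _ = (Real.exp 1)⁻¹ := by simp
  -- bound on set integral of u ρ
  have hsum_int : Integrable
      (fun ω => (b * Z ω - c) * ρ ω + max (-(b * Z ω - c)) 0 * ρ ω) μ :=
    huρint.add hnegint
  have hsum_nn : ∀ ω, 0 ≤ (b * Z ω - c) * ρ ω + max (-(b * Z ω - c)) 0 * ρ ω := by
    intro ω
    set s := b * Z ω - c with hs
    rcases le_total 0 s with h | h
    · have h1 : 0 ≤ s * ρ ω := mul_nonneg h (hρnn ω)
      have h2 : 0 ≤ max (-s) 0 * ρ ω := hnegnn ω
      linarith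
    · rw [max_eq_left (by linarith : (0:ℝ) ≤ -s)]
      have : s * ρ ω + -s * ρ ω = 0 := by ring
      linarith
  have hEuρ : ∫ ω in E, (b * Z ω - c) * ρ ω ∂μ ≤ c + (Real.exp 1)⁻¹ := by
    calc ∫ ω in E, (b * Z ω - c) * ρ ω ∂μ
        ≤ ∫ ω in E, ((b * Z ω - c) * ρ ω + max (-(b * Z ω - c)) 0 * ρ ω) ∂μ := by
          refine setIntegral_mono_on huρint.integrableOn hsum_int.integrableOn hE ?_
          intro ω _
          exact le_add_of_nonneg_right (hnegnn ω)
      _ ≤ ∫ ω, ((b * Z ω - c) * ρ ω + max (-(b * Z ω - c)) 0 * ρ ω) ∂μ :=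
          setIntegral_le_integral hsum_int (Filter.Eventually.of_forall hsum_nn)
      _ = c + ∫ ω, max (-(b * Z ω - c)) 0 * ρ ω ∂μ := by
          rw [integral_add huρint hnegint, huρ]
      _ ≤ c + (Real.exp 1)⁻¹ := by linarith
  -- Jensen pointwise
  have hjensen : ∀ ω, Real.exp (-m) * ((1 + m - (b * Z ω - c)) * ρ ω) ≤ 1 := by
    intro ω
    set s := b * Z ω - c with hs
    have h1 : 1 + m - s ≤ Real.exp (m - s) := by
      linarith [Real.add_one_le_exp (m - s)]
    have h2 : (1 + m - s) * ρ ω ≤ Real.exp (m - s) * Real.exp s := by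
      calc (1 + m - s) * ρ ω ≤ Real.exp (m - s) * ρ ω :=
            mul_le_mul_of_nonneg_right h1 (hρnn ω)
        _ = Real.exp (m - s) * Real.exp s := rfl
    have h3 : Real.exp (m - s) * Real.exp s = Real.exp m := by
      rw [← Real.exp_add]; congr 1; ring
    have h4 : (1 + m - s) * ρ ω ≤ Real.exp m := h3 ▸ h2
    calc Real.exp (-m) * ((1 + m - s) * ρ ω) ≤ Real.exp (-m) * Real.exp m :=
          mul_le_mul_of_nonneg_left h4 (Real.exp_pos _).le
      _ = 1 := by rw [← Real.exp_add, neg_add_cancel, Real.exp_zero]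
  have hfint : Integrable (fun ω => Real.exp (-m) * ((1 + m - (b * Z ω - c)) * ρ ω)) μ := by
    have hrw : (fun ω => Real.exp (-m) * ((1 + m - (b * Z ω - c)) * ρ ω))
        = fun ω => Real.exp (-m) * ((1 + m) * ρ ω) - Real.exp (-m) * ((b * Z ω - c) * ρ ω) := by
      funext ω; ring
    rw [hrw]
    exact ((hρint.const_mul _).const_mul _).sub (huρint.const_mul _)
  have hmain : ∫ ω in E, Real.exp (-m) * ((1 + m - (b * Z ω - c)) * ρ ω) ∂μ
      ≤ (μ E).toReal := by
    calc ∫ ω in E, Real.exp (-m) * ((1 + m - (b * Z ω - c)) * ρ ω) ∂μ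
        ≤ ∫ _ω in E, (1:ℝ) ∂μ :=
          setIntegral_mono_on hfint.integrableOn (integrable_const 1).integrableOn hE
            (fun ω _ => hjensen ω)
      _ = (μ E).toReal := by simp; rfl
  have hLHS : ∫ ω in E, Real.exp (-m) * ((1 + m - (b * Z ω - c)) * ρ ω) ∂μ
      = Real.exp (-m) * ((1 + m) * ν - ∫ ω in E, (b * Z ω - c) * ρ ω ∂μ) := by
    have hrw : (fun ω => Real.exp (-m) * ((1 + m - (b * Z ω - c)) * ρ ω))
        = fun ω => Real.exp (-m) * ((1 + m) * ρ ω - (b * Z ω - c) * ρ ω) := by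
      funext ω; ring
    rw [hrw, integral_const_mul,
      integral_sub (hρint.integrableOn.const_mul _) huρint.integrableOn,
      integral_const_mul, ← hνeq]
  have hstep : Real.exp (-m) * ν
      ≤ Real.exp (-m) * ((1 + m) * ν - ∫ ω in E, (b * Z ω - c) * ρ ω ∂μ) := by
    refine mul_le_mul_of_nonneg_left ?_ (Real.exp_pos _).le
    nlinarith [hEuρ, hmν]
  have hexpm : -(b ^ 2 * v + 2 / Real.exp 1) / (2 * ν) = -m := by
    rw [hm]; ring
  rw [hexpm]
  calc ν * Real.exp (-m) = Real.exp (-m) * ν := mul_comm _ _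
    _ ≤ Real.exp (-m) * ((1 + m) * ν - ∫ ω in E, (b * Z ω - c) * ρ ω ∂μ) := hstep
    _ = ∫ ω in E, Real.exp (-m) * ((1 + m - (b * Z ω - c)) * ρ ω) ∂μ := hLHS.symm
    _ ≤ (μ E).toReal := hmain
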